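/- In the transition system R2, for all integers n, c with n ≥ 0, the term g n c reduces to ret (n * ((n*(n+1))/2)) (c+2); that is, Relation.ReflTransGen step2 (g n c) (ret (n * ((n*(n+1))/2)) (c+2)) holds. In words: g(n) returns n times the sum 0+1+...+n and increments the global call counter num exactly twice (once in g and once in the call of sum1). -/

import Mathlib

inductive Term2 : Type
  | sum1 : ℤ → ℤ → Term2
  | u1 : ℤ → ℤ → ℤ → ℤ → Term2
  | ret : ℤ → ℤ → Term2
  | g : ℤ → ℤ → Term2
  | u2 : ℤ → ℤ → ℤ → Term2
  | u2' : ℤ → ℤ → ℤ → Term2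
  | u4 : ℤ → ℤ → ℤ → Term2
  | u3 : ℤ → ℤ → ℤ → Term2 → Term2

open Term2

inductive step2 : Term2 → Term2 → Prop
  | sum1_init (x num : ℤ) : step2 (sum1 x num) (u1 x 0 0 (num+1))
  | u1_loop (x i z num : ℤ) : i < x → step2 (u1 x i z num) (u1 x (i+1) (z+i+1) num)
  | u1_exit (x i z num : ℤ) : ¬ i < x → step2 (u1 x i z num) (ret z num)
  | g_init (x num : ℤ) : step2 (g x num) (u2 x num 0)
  | u2_step (x num z : ℤ) : step2 (u2 x num z) (u2' x (num+1) z)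
  | u2'_step (x num z : ℤ) : step2 (u2' x num z) (u3 x num z (sum1 x num))
  | u3_ret (x numOld z y numNew : ℤ) : step2 (u3 x numOld z (ret y numNew)) (u4 x numNew y)
  | u4_step (x num z : ℤ) : step2 (u4 x num z) (ret (x*z) num)
  | u3_cong (x num z : ℤ) {t t' : Term2} : step2 t t' → step2 (u3 x num z t) (u3 x num z t')

lemma loop2 (k : ℕ) : ∀ (x i z num : ℤ), x = i + k →
    Relation.ReflTransGen step2 (u1 x i z num)
      (ret (z + ∑ j ∈ Finset.range k, (i + 1 + (j:ℤ))) num) := by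
  induction k with
  | zero =>
    intro x i z num hx
    simp only [Finset.range_zero, Finset.sum_empty, add_zero]
    exact Relation.ReflTransGen.single (step2.u1_exit x i z num (by omega))
  | succ k ih =>
    intro x i z num hx
    have h1 : i < x := by push_cast at hx; omega
    refine Relation.ReflTransGen.head (step2.u1_loop x i z num h1) ?_
    have hs : z + ∑ j ∈ Finset.range (k+1), (i + 1 + (j:ℤ))
        = (z+i+1) + ∑ j ∈ Finset.range k, ((i+1) + 1 + (j:ℤ)) := by
      rw [Finset.sum_range_succ' (fun j => (i + 1 + (j:ℤ)))]
      push_cast; ring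
    rw [hs]
    exact ih x (i+1) (z+i+1) num (by push_cast at hx ⊢; omega)

lemma sum1_run (x num : ℤ) (hx : x ≥ 0) :
    Relation.ReflTransGen step2 (sum1 x num) (ret ((x*(x+1))/2) (num+1)) := by
  refine Relation.ReflTransGen.head (step2.sum1_init x num) ?_
  have h := loop2 x.toNat x 0 0 (num+1) (by omega)
  have hsum : (0 + ∑ j ∈ Finset.range x.toNat, ((0:ℤ) + 1 + (j:ℤ))) = (x*(x+1))/2 := by
    have : ∑ j ∈ Finset.range x.toNat, ((0:ℤ) + 1 + (j:ℤ))
        = ((∑ j ∈ Finset.range (x.toNat + 1), j : ℕ) : ℤ) := by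
      push_cast
      rw [Finset.sum_range_succ' (fun j => ((j:ℕ):ℤ))]
      push_cast
      simp [add_comm]
    rw [zero_add, this, Finset.sum_range_id]
    have h2 : ((x.toNat : ℤ)) = x := by omega
    push_cast [Int.natCast_div]
    rw [h2]
    ring_nf
  rwa [hsum] at h

theorem stmt_4 (n c : ℤ) (hn : n ≥ 0) :
    Relation.ReflTransGen step2 (g n c) (ret (n * ((n*(n+1))/2)) (c+2)) := by
  refine Relation.ReflTransGen.head (step2.g_init n c) ?_
  refine Relation.ReflTransGen.head (step2.u2_step n c 0) ?_
  refine Relation.ReflTransGen.head (step2.u2'_step n (c+1) 0) ?_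
  have hinner : Relation.ReflTransGen step2 (u3 n (c+1) 0 (sum1 n (c+1)))
      (u3 n (c+1) 0 (ret ((n*(n+1))/2) (c+2))) := by
    have := sum1_run n (c+1) hn
    have h2 : Relation.ReflTransGen step2 (u3 n (c+1) 0 (sum1 n (c+1)))
        (u3 n (c+1) 0 (ret ((n*(n+1))/2) (c+1+1))) :=
      Relation.ReflTransGen.lift (fun t => u3 n (c+1) 0 t)
        (fun a b h => step2.u3_cong n (c+1) 0 h) _ _ this
    have : c + 1 + 1 = c + 2 := by ring
    rwa [this] at h2
  refine hinner.trans ?_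
  refine Relation.ReflTransGen.head (step2.u3_ret n (c+1) 0 ((n*(n+1))/2) (c+2)) ?_
  exact Relation.ReflTransGen.single (step2.u4_step n (c+2) ((n*(n+1))/2))
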